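/- Inexact residual monotonicity: for the inexact relaxed iteration z_{k+1} = z_k + λ_k(e_k^ε) where the computed update satisfies e_k = (z_k − z_{k+1})/λ_k + ε_k with e_k = z_k − T z_k, T α-averaged, and λ_k ∈ (0, 1/α), one has ‖e_{k+1}‖² ≤ ‖e_k‖² + ν₂‖ε_k‖, where ν₂ = 2 sup_j ‖e_j − e_{j+1}‖ (assumed finite). -/

import Mathlib

open scoped RealInnerProductSpace

def Nonexpansive {H : Type*} [NormedAddCommGroup H] [InnerProductSpace ℝ H]
    (T : H → H) : Prop := ∀ x y, ‖T x - T y‖ ≤ ‖x - y‖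

def Averaged {H : Type*} [NormedAddCommGroup H] [InnerProductSpace ℝ H]
    (α : ℝ) (T : H → H) : Prop :=
  ∃ R : H → H, Nonexpansive R ∧ ∀ x, T x = x + α • (R x - x)

theorem inexact_residual_quasi_monotone
    {H : Type*} [NormedAddCommGroup H] [InnerProductSpace ℝ H]
    (α : ℝ) (hα : α ∈ Set.Ioo (0:ℝ) 1)
    (T : H → H) (hT : Averaged α T)
    (lam : ℕ → ℝ) (hlam : ∀ k, lam k ∈ Set.Ioo (0:ℝ) (1/α))
    (ε : ℕ → H)
    (z : ℕ → H) (e : ℕ → H) (he : ∀ k, e k = z k - T (z k))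
    (hz : ∀ k, z (k+1) = z k - lam k • (e k - ε k))
    (ν₂ : ℝ) (hν₂ : ∀ k, 2 * ‖e k - e (k+1)‖ ≤ ν₂) :
    ∀ k, ‖e (k+1)‖^2 ≤ ‖e k‖^2 + ν₂ * ‖ε k‖ := by
  obtain ⟨ha0, ha1⟩ := hα
  obtain ⟨R, hR, hTR⟩ := hT
  intro k
  obtain ⟨hL0, hL1⟩ := hlam k
  set L := lam k with hLdef
  have haL : 0 < α * L := mul_pos ha0 hL0
  have haL1 : α * L < 1 := by
    calc α * L < α * (1/α) := mul_lt_mul_of_pos_left hL1 ha0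
    _ = 1 := by field_simp
  -- e j = α • (z j - R (z j))
  have heR : ∀ j, e j = α • (z j - R (z j)) := by
    intro j
    rw [he j, hTR (z j)]
    module
  set d : H := e k - e (k + 1) with hd
  set u : H := z k - z (k + 1) with hu
  set v : H := R (z k) - R (z (k + 1)) with hv
  have huL : u = L • (e k - ε k) := by rw [hu, hz k]; abel
  have hdv : d = α • (u - v) := by
    rw [hd, heR k, heR (k+1), hu, hv]
    module
  -- nonexpansiveness: ‖v‖ ≤ ‖u‖
  have hnv : ‖v‖ ≤ ‖u‖ := hR (z k) (z (k+1))
  -- key inequality: ‖d‖^2 ≤ 2αL ⟪e k - ε k, d⟫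
  have huv : ‖u - v‖^2 ≤ 2 * ⟪u, u - v⟫ := by
    have h1 : ‖u - v‖^2 = ‖u‖^2 - 2 * ⟪u, v⟫ + ‖v‖^2 := @norm_sub_sq_real _ _ _ u v
    have h2 : ⟪u, u - v⟫ = ‖u‖^2 - ⟪u, v⟫ := by
      rw [inner_sub_right, real_inner_self_eq_norm_sq]
    nlinarith [norm_nonneg u, norm_nonneg v]
  have key : ‖d‖^2 ≤ 2 * (α * L) * ⟪e k - ε k, d⟫ := by
    have h1 : ‖d‖^2 = α^2 * ‖u - v‖^2 := by
      rw [hdv, norm_smul, Real.norm_eq_abs, abs_of_pos ha0, mul_pow]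
    have h2 : ⟪e k - ε k, d⟫ = (α / L) * ⟪u, u - v⟫ := by
      have h3 : e k - ε k = (1/L) • u := by
        rw [huL, smul_smul]; field_simp; rw [one_smul]
      rw [h3, hdv, real_inner_smul_left, real_inner_smul_right]
      field_simp
    rw [h1, h2]
    have : 2 * (α * L) * ((α / L) * ⟪u, u - v⟫) = α^2 * (2 * ⟪u, u - v⟫) := by
      field_simp
    rw [this]
    exact mul_le_mul_of_nonneg_left huv (sq_nonneg α)
  -- expand ‖e (k+1)‖^2
  have hek1 : e (k+1) = e k - d := by rw [hd]; abel
  have hsq : ‖e (k+1)‖^2 = ‖e k‖^2 - 2 * ⟪e k, d⟫ + ‖d‖^2 := by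
    rw [hek1, @norm_sub_sq_real]
  have hinner : ⟪e k - ε k, d⟫ = ⟪e k, d⟫ - ⟪ε k, d⟫ := by
    rw [inner_sub_left]
  have hB : -(‖ε k‖ * ‖d‖) ≤ ⟪ε k, d⟫ := by
    have := abs_real_inner_le_norm (ε k) d
    have := abs_le.mp this
    linarith [this.1]
  have hν := hν₂ k
  rw [← hd] at hν
  have hεn : (0:ℝ) ≤ ‖ε k‖ := norm_nonneg _
  have hdn : (0:ℝ) ≤ ‖d‖ := norm_nonneg _
  rw [hinner] at key
  rw [hsq]
  nlinarith [mul_nonneg (mul_nonneg haL.le hεn) (sub_nonneg.mpr hν),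
    mul_nonneg (sub_nonneg.mpr haL1.le) (sq_nonneg ‖d‖),
    mul_nonneg (mul_nonneg haL.le hεn) hdn,
    mul_le_mul_of_nonneg_left hB haL.le]
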